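/- In a tree Ising model with all positive edge parameters, P(X_r = 1 | X_L = 1) (all leaves set to +1) is monotonically non-decreasing in each edge parameter θ_{ij}. -/

import Mathlib

/-- Spin value of a Boolean configuration entry: `true ↦ +1`, `false ↦ −1`. -/
noncomputable def val (b : Bool) : ℝ := if b then 1 else -1

/-- Unnormalized Ising weight `∏_{edges {u,v}} exp(θ_{uv} x_u x_v)` of a configuration. -/
noncomputable def isingWeight {V : Type*} [Fintype V] [LinearOrder V]
    (G : SimpleGraph V) [DecidableRel G.Adj] (θ : V → V → ℝ) (σ : V → Bool) : ℝ :=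
  ∏ p ∈ Finset.univ.filter (fun p : V × V => p.1 < p.2 ∧ G.Adj p.1 p.2),
    Real.exp (θ p.1 p.2 * val (σ p.1) * val (σ p.2))

/-- Conditional probability `P(X_r = b | X_L = y|_L)` in the Ising model on `G`. -/
noncomputable def condRootProb {V : Type*} [Fintype V] [LinearOrder V]
    (G : SimpleGraph V) [DecidableRel G.Adj] (θ : V → V → ℝ)
    (r : V) (L : Finset V) (b : Bool) (y : V → Bool) : ℝ :=
  (∑ σ : V → Bool, if (∀ v ∈ L, σ v = y v) ∧ σ r = b then isingWeight G θ σ else 0) /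
    (∑ σ : V → Bool, if ∀ v ∈ L, σ v = y v then isingWeight G θ σ else 0)

section Helpers
open Finset

lemma ite_w_nonneg {α : Type*} (w : α → ℝ) (hw : ∀ a, 0 ≤ w a) (P : α → Prop)
    [DecidablePred P] : (0 : α → ℝ) ≤ fun a => if P a then w a else 0 := by
  intro a; dsimp; split <;> simp [hw a]

/-- Ahlswede–Daykin / four functions specialization to indicator-weighted sums. -/
lemma ad_ineq {α : Type*} [DistribLattice α] [Fintype α]
    (w : α → ℝ) (hw : ∀ a, 0 ≤ w a)
    (hlsm : ∀ a b, w a * w b ≤ w (a ⊓ b) * w (a ⊔ b))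
    (P₁ P₂ P₃ P₄ : α → Prop) [DecidablePred P₁] [DecidablePred P₂]
    [DecidablePred P₃] [DecidablePred P₄]
    (hcomb : ∀ a b, P₁ a → P₂ b → P₃ (a ⊓ b) ∧ P₄ (a ⊔ b)) :
    (∑ a, if P₁ a then w a else 0) * (∑ a, if P₂ a then w a else 0) ≤
      (∑ a, if P₃ a then w a else 0) * (∑ a, if P₄ a then w a else 0) := by
  apply four_functions_theorem_univ _ _ _ _ (ite_w_nonneg w hw P₁) (ite_w_nonneg w hw P₂)
    (ite_w_nonneg w hw P₃) (ite_w_nonneg w hw P₄)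
  intro a b
  by_cases h1 : P₁ a
  · by_cases h2 : P₂ b
    · obtain ⟨h3, h4⟩ := hcomb a b h1 h2
      simp only [if_pos h1, if_pos h2, if_pos h3, if_pos h4]
      exact hlsm a b
    · simp only [if_neg h2, mul_zero]
      exact mul_nonneg (ite_w_nonneg w hw P₃ _) (ite_w_nonneg w hw P₄ _)
  · simp only [if_neg h1, zero_mul]
    exact mul_nonneg (ite_w_nonneg w hw P₃ _) (ite_w_nonneg w hw P₄ _)

/-- Factorization of a sum of a product of functions depending on disjoint coordinate sets. -/
lemma factor_sum {X : Type*} [Fintype X] [DecidableEq X] (S : X → Prop) [DecidablePred S]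
    (F G : (X → Bool) → ℝ)
    (hF : ∀ σ τ : X → Bool, (∀ v, S v → σ v = τ v) → F σ = F τ)
    (hG : ∀ σ τ : X → Bool, (∀ v, ¬ S v → σ v = τ v) → G σ = G τ) :
    (∑ σ, F σ) * (∑ σ, G σ) = (Fintype.card (X → Bool) : ℝ) * ∑ σ, F σ * G σ := by
  classical
  set c : (X → Bool) → (X → Bool) → (X → Bool) := fun σ τ v => if S v then σ v else τ v with hc
  have hinv : Function.Involutive (fun p : (X → Bool) × (X → Bool) => (c p.1 p.2, c p.2 p.1)) := by
    intro p
    ext v <;> simp only [c] <;> split <;> rfl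
  have key : ∀ σ τ, F σ * G τ = (fun ρ => F ρ * G ρ) (c σ τ) := by
    intro σ τ
    have h1 : F σ = F (c σ τ) := hF _ _ (fun v hv => by simp [c, hv])
    have h2 : G τ = G (c σ τ) := hG _ _ (fun v hv => by simp [c, hv])
    rw [h1, h2]
  rw [Finset.sum_mul_sum]
  rw [show (∑ i : X → Bool, ∑ j : X → Bool, F i * G j) = ∑ p : (X → Bool) × (X → Bool), F p.1 * G p.2 from (Fintype.sum_prod_type (fun p : (X → Bool) × (X → Bool) => F p.1 * G p.2)).symm]
  calc (∑ p : (X → Bool) × (X → Bool), F p.1 * G p.2)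
      = ∑ p : (X → Bool) × (X → Bool), (fun ρ => F ρ * G ρ) (c p.1 p.2) := by
        apply Finset.sum_congr rfl; intro p _; exact key p.1 p.2
    _ = ∑ p : (X → Bool) × (X → Bool), (fun ρ => F ρ * G ρ) p.1 :=
        Fintype.sum_equiv hinv.toPerm _ _ (fun p => rfl)
    _ = (Fintype.card (X → Bool) : ℝ) * ∑ σ, F σ * G σ := by
        rw [show (∑ p : (X → Bool) × (X → Bool), (fun ρ => F ρ * G ρ) p.1)
              = ∑ i : X → Bool, ∑ _j : X → Bool, F i * G i from
            Fintype.sum_prod_type (fun p : (X → Bool) × (X → Bool) => F p.1 * G p.1)]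
        simp only [Finset.sum_const, Finset.card_univ, nsmul_eq_mul]
        rw [Finset.mul_sum]

end Helpers

section GraphHelpers
open SimpleGraph Finset

variable {V : Type*} (G : SimpleGraph V)

lemma reach_aux (i j : V) : ∀ {v x : V} (_ : G.Walk v x), x = i ∨ x = j →
    (G \ fromEdgeSet {s(i, j)}).Reachable i v ∨ (G \ fromEdgeSet {s(i, j)}).Reachable j v := by
  intro v x p
  induction p with
  | nil =>
    rintro (rfl | rfl)
    · exact Or.inl (Reachable.refl _)
    · exact Or.inr (Reachable.refl _)
  | @cons v u x h q ih =>
    intro hx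
    by_cases he : s(v, u) = s(i, j)
    · rw [Sym2.eq_iff] at he
      rcases he with ⟨rfl, rfl⟩ | ⟨rfl, rfl⟩
      · exact Or.inl (Reachable.refl _)
      · exact Or.inr (Reachable.refl _)
    · have hadj : (G \ fromEdgeSet {s(i, j)}).Adj v u := by
        rw [sdiff_adj, fromEdgeSet_adj]
        exact ⟨h, by simp [he]⟩
      rcases ih hx with hi | hj
      · exact Or.inl (hi.trans hadj.symm.reachable)
      · exact Or.inr (hj.trans hadj.symm.reachable)

lemma reach_cover (hconn : G.Preconnected) (i j v : V) :
    (G \ fromEdgeSet {s(i, j)}).Reachable i v ∨ (G \ fromEdgeSet {s(i, j)}).Reachable j v := by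
  obtain ⟨p⟩ := hconn v i
  exact reach_aux G i j p (Or.inl rfl)

lemma tree_not_reach (hT : G.IsTree) {i j : V} (hij : G.Adj i j) :
    ¬ (G \ fromEdgeSet {s(i, j)}).Reachable i j :=
  (isBridge_iff).mp (isAcyclic_iff_forall_adj_isBridge.mp hT.IsAcyclic hij)

lemma step_iff {i j : V} (u w : V) (huw : G.Adj u w) (hne : s(u, w) ≠ s(i, j)) :
    ((G \ fromEdgeSet {s(i, j)}).Reachable i u ↔ (G \ fromEdgeSet {s(i, j)}).Reachable i w) := by
  have hadj : (G \ fromEdgeSet {s(i, j)}).Adj u w := by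
    rw [sdiff_adj, fromEdgeSet_adj]
    exact ⟨huw, by simp [hne]⟩
  exact ⟨fun h => h.trans hadj.reachable, fun h => h.trans hadj.symm.reachable⟩

end GraphHelpers

section WeightHelpers
open Finset

lemma val_supermod {t : ℝ} (ht : 0 < t) (a b a' b' : Bool) :
    Real.exp (t * val a * val b) * Real.exp (t * val a' * val b') ≤
      Real.exp (t * val (a ⊓ a') * val (b ⊓ b')) * Real.exp (t * val (a ⊔ a') * val (b ⊔ b')) := by
  rw [← Real.exp_add, ← Real.exp_add, Real.exp_le_exp]
  cases a <;> cases b <;> cases a' <;> cases b' <;>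
    simp [_root_.val] <;> nlinarith

lemma prodexp_nonneg {V : Type*} (θ : V → V → ℝ) (P : Finset (V × V))
    (σ : V → Bool) : 0 ≤ ∏ p ∈ P, Real.exp (θ p.1 p.2 * val (σ p.1) * val (σ p.2)) :=
  Finset.prod_nonneg fun p _ => (Real.exp_pos _).le

lemma prodexp_pos {V : Type*} (θ : V → V → ℝ) (P : Finset (V × V))
    (σ : V → Bool) : 0 < ∏ p ∈ P, Real.exp (θ p.1 p.2 * val (σ p.1) * val (σ p.2)) :=
  Finset.prod_pos fun p _ => Real.exp_pos _

lemma prodexp_lsm {V : Type*} [Fintype V] (θ : V → V → ℝ) (P : Finset (V × V))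
    (hpos : ∀ p ∈ P, 0 < θ p.1 p.2) (σ τ : V → Bool) :
    (∏ p ∈ P, Real.exp (θ p.1 p.2 * val (σ p.1) * val (σ p.2))) *
      (∏ p ∈ P, Real.exp (θ p.1 p.2 * val (τ p.1) * val (τ p.2))) ≤
    (∏ p ∈ P, Real.exp (θ p.1 p.2 * val ((σ ⊓ τ) p.1) * val ((σ ⊓ τ) p.2))) *
      (∏ p ∈ P, Real.exp (θ p.1 p.2 * val ((σ ⊔ τ) p.1) * val ((σ ⊔ τ) p.2))) := by
  rw [← Finset.prod_mul_distrib, ← Finset.prod_mul_distrib]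
  apply Finset.prod_le_prod
  · intro p _; exact mul_nonneg (Real.exp_pos _).le (Real.exp_pos _).le
  · intro p hp
    have := val_supermod (hpos p hp) (σ p.1) (σ p.2) (τ p.1) (τ p.2)
    simpa [Pi.inf_apply, Pi.sup_apply] using this

lemma isingWeight_pos {V : Type*} [Fintype V] [LinearOrder V]
    (G : SimpleGraph V) [DecidableRel G.Adj] (θ : V → V → ℝ) (σ : V → Bool) :
    0 < isingWeight G θ σ := by
  unfold isingWeight
  exact Finset.prod_pos fun p _ => Real.exp_pos _

lemma val_mul_of_eq {a b : Bool} (h : a = b) : val a * val b = 1 := by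
  subst h; cases a <;> norm_num [_root_.val]

lemma val_mul_of_ne {a b : Bool} (h : a ≠ b) : val a * val b = -1 := by
  cases a <;> cases b <;> simp_all <;> norm_num [_root_.val]

end WeightHelpers

open Finset SimpleGraph in
set_option maxHeartbeats 1000000 in
lemma main_lemma {V : Type*} [Fintype V] [LinearOrder V]
    (G : SimpleGraph V) [DecidableRel G.Adj] (hT : G.IsTree)
    (r : V) (L : Finset V)
    (θ θ' : V → V → ℝ)
    (hθ : ∀ p q, G.Adj p q → 0 < θ p q)
    (i j : V) (hij : G.Adj i j)
    (hagree : ∀ p q, ¬(p = i ∧ q = j) → ¬(p = j ∧ q = i) → θ' p q = θ p q)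
    (hmono : θ i j ≤ θ' i j) (hmono' : θ j i ≤ θ' j i)
    (hr : (G \ SimpleGraph.fromEdgeSet {s(i, j)}).Reachable i r) :
    condRootProb G θ r L true (fun _ => true) ≤
      condRootProb G θ' r L true (fun _ => true) := by
  classical
  set G' := G \ SimpleGraph.fromEdgeSet {s(i, j)} with hG'
  set S : V → Prop := fun v => G'.Reachable i v with hSdef
  have hSi : S i := Reachable.refl _
  have hSr : S r := hr
  have hSj : ¬ S j := tree_not_reach G hT hij
  have hine : i ≠ j := hij.ne
  set eo : V × V := if i < j then (i, j) else (j, i) with heodef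
  have heocases : (eo = (i, j) ∧ i < j) ∨ (eo = (j, i) ∧ j < i) := by
    rcases lt_or_gt_of_ne hine with h | h
    · exact Or.inl ⟨if_pos h, h⟩
    · exact Or.inr ⟨if_neg (not_lt.mpr h.le), h⟩
  set E : Finset (V × V) := Finset.univ.filter (fun p : V × V => p.1 < p.2 ∧ G.Adj p.1 p.2)
    with hEdef
  have heoE : eo ∈ E := by
    rcases heocases with ⟨he, hlt⟩ | ⟨he, hlt⟩ <;> rw [he] <;>
      simp [hEdef, hlt, hij, hij.symm]
  have heokey : ∀ p ∈ E, p ≠ eo → s(p.1, p.2) ≠ s(i, j) := by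
    intro p hp hpne heq
    rw [Sym2.eq_iff] at heq
    have hlt : p.1 < p.2 := (Finset.mem_filter.mp hp).2.1
    rcases heq with ⟨h1, h2⟩ | ⟨h1, h2⟩
    · apply hpne
      rcases heocases with ⟨he, hlt'⟩ | ⟨he, hlt'⟩
      · rw [he, ← h1, ← h2]
      · exfalso; rw [h1, h2] at hlt; exact absurd hlt (not_lt.mpr hlt'.le)
    · apply hpne
      rcases heocases with ⟨he, hlt'⟩ | ⟨he, hlt'⟩
      · exfalso; rw [h1, h2] at hlt; exact absurd hlt (not_lt.mpr hlt'.le)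
      · rw [he, ← h1, ← h2]
  have hadjE : ∀ p ∈ E, G.Adj p.1 p.2 := fun p hp => (Finset.mem_filter.mp hp).2.2
  have hSiff : ∀ p ∈ E, p ≠ eo → (S p.1 ↔ S p.2) := by
    intro p hp hpne
    exact step_iff G p.1 p.2 (hadjE p hp) (heokey p hp hpne)
  have hagE : ∀ p ∈ E, p ≠ eo → θ' p.1 p.2 = θ p.1 p.2 := by
    intro p hp hpne
    apply hagree
    · rintro ⟨h1, h2⟩; exact heokey p hp hpne (by rw [h1, h2])
    · rintro ⟨h1, h2⟩; exact heokey p hp hpne (by rw [h1, h2, Sym2.eq_swap])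
  set ES : Finset (V × V) := E.filter (fun p => p ≠ eo ∧ S p.1) with hESdef
  set EC : Finset (V × V) := E.filter (fun p => p ≠ eo ∧ ¬ S p.1) with hECdef
  set WS : (V → Bool) → ℝ :=
    fun σ => ∏ p ∈ ES, Real.exp (θ p.1 p.2 * val (σ p.1) * val (σ p.2)) with hWSdef
  set WC : (V → Bool) → ℝ :=
    fun σ => ∏ p ∈ EC, Real.exp (θ p.1 p.2 * val (σ p.1) * val (σ p.2)) with hWCdef
  set WSWC : (V → Bool) → ℝ := fun σ => WS σ * WC σ with hWSWCdef
  set Φ : ((V → Bool) → Prop) → ((V → Bool) → ℝ) → ℝ :=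
    fun P w => ∑ σ : V → Bool, if P σ then w σ else 0 with hΦdef
  -- basic Φ lemmas
  have hΦcongr : ∀ (P Q : (V → Bool) → Prop) (w : (V → Bool) → ℝ),
      (∀ σ, P σ ↔ Q σ) → Φ P w = Φ Q w := by
    intro P Q w h
    rw [hΦdef]
    exact Finset.sum_congr rfl fun σ _ => if_congr (h σ) rfl rfl
  have hΦsplit : ∀ (P Q : (V → Bool) → Prop) (w : (V → Bool) → ℝ),
      Φ P w = Φ (fun σ => P σ ∧ Q σ) w + Φ (fun σ => P σ ∧ ¬ Q σ) w := by
    intro P Q w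
    rw [hΦdef]
    simp only
    rw [← Finset.sum_add_distrib]
    apply Finset.sum_congr rfl
    intro σ _
    by_cases hP : P σ
    · by_cases hQ : Q σ
      · rw [if_pos hP, if_pos ⟨hP, hQ⟩, if_neg (by tauto), add_zero]
      · rw [if_pos hP, if_neg (by tauto), if_pos ⟨hP, hQ⟩, zero_add]
    · rw [if_neg hP, if_neg (by tauto), if_neg (by tauto), add_zero]
  have hΦnn : ∀ (P : (V → Bool) → Prop) (w : (V → Bool) → ℝ),
      (∀ σ, 0 ≤ w σ) → 0 ≤ Φ P w := by
    intro P w hw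
    rw [hΦdef]
    apply Finset.sum_nonneg
    intro σ _
    split <;> simp [hw σ]
  have hΦcomp : ∀ (P : (V → Bool) → Prop) (w : (V → Bool) → ℝ) (e : Equiv.Perm (V → Bool)),
      (∀ σ, w (e σ) = w σ) → Φ (fun σ => P (e σ)) w = Φ P w := by
    intro P w e hw
    rw [hΦdef]
    simp only
    calc (∑ σ : V → Bool, if P (e σ) then w σ else 0)
        = ∑ σ : V → Bool, (fun ρ => if P ρ then w ρ else 0) (e σ) := by
          apply Finset.sum_congr rfl
          intro σ _
          show (if P (e σ) then w σ else 0) = (if P (e σ) then w (e σ) else 0)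
          rw [hw σ]
      _ = ∑ σ : V → Bool, if P σ then w σ else 0 :=
          Equiv.sum_comp e (fun ρ : V → Bool => if P ρ then w ρ else 0)
  -- weights are positive / nonneg
  have hWSnn : ∀ σ, 0 ≤ WS σ := fun σ => prodexp_nonneg θ ES σ
  have hWCnn : ∀ σ, 0 ≤ WC σ := fun σ => prodexp_nonneg θ EC σ
  have hWSWCnn : ∀ σ, 0 ≤ WSWC σ := fun σ => mul_nonneg (hWSnn σ) (hWCnn σ)
  -- log-supermodularity
  have hWSlsm : ∀ σ τ, WS σ * WS τ ≤ WS (σ ⊓ τ) * WS (σ ⊔ τ) := by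
    intro σ τ
    exact prodexp_lsm θ ES
      (fun p hp => hθ p.1 p.2 (hadjE p (Finset.mem_filter.mp hp).1)) σ τ
  have hWClsm : ∀ σ τ, WC σ * WC τ ≤ WC (σ ⊓ τ) * WC (σ ⊔ τ) := by
    intro σ τ
    exact prodexp_lsm θ EC
      (fun p hp => hθ p.1 p.2 (hadjE p (Finset.mem_filter.mp hp).1)) σ τ
  -- dependence of WS, WC on coordinates
  have hESmem : ∀ p ∈ ES, S p.1 ∧ S p.2 := by
    intro p hp
    rw [hESdef, Finset.mem_filter] at hp
    exact ⟨hp.2.2, (hSiff p hp.1 hp.2.1).mp hp.2.2⟩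
  have hECmem : ∀ p ∈ EC, ¬ S p.1 ∧ ¬ S p.2 := by
    intro p hp
    rw [hECdef, Finset.mem_filter] at hp
    exact ⟨hp.2.2, fun h2 => hp.2.2 ((hSiff p hp.1 hp.2.1).mpr h2)⟩
  have hWSdep : ∀ σ τ : V → Bool, (∀ v, S v → σ v = τ v) → WS σ = WS τ := by
    intro σ τ h
    apply Finset.prod_congr rfl
    intro p hp
    rw [h p.1 (hESmem p hp).1, h p.2 (hESmem p hp).2]
  have hWCdep : ∀ σ τ : V → Bool, (∀ v, ¬ S v → σ v = τ v) → WC σ = WC τ := by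
    intro σ τ h
    apply Finset.prod_congr rfl
    intro p hp
    rw [h p.1 (hECmem p hp).1, h p.2 (hECmem p hp).2]
  -- decomposition of the Ising weight
  have hdecomp : ∀ (θh : V → V → ℝ), (∀ p ∈ E, p ≠ eo → θh p.1 p.2 = θ p.1 p.2) →
      ∀ σ : V → Bool,
      isingWeight G θh σ =
        Real.exp (θh eo.1 eo.2 * (val (σ i) * val (σ j))) * WSWC σ := by
    intro θh hag σ
    have h0 : isingWeight G θh σ
        = ∏ p ∈ E, Real.exp (θh p.1 p.2 * val (σ p.1) * val (σ p.2)) := rfl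
    have hEunion : E = {eo} ∪ (ES ∪ EC) := by
      ext p
      simp only [Finset.mem_union, Finset.mem_singleton, hESdef, hECdef, Finset.mem_filter]
      constructor
      · intro h
        by_cases hpe : p = eo
        · exact Or.inl hpe
        · by_cases hS : S p.1
          · exact Or.inr (Or.inl ⟨h, hpe, hS⟩)
          · exact Or.inr (Or.inr ⟨h, hpe, hS⟩)
      · rintro (rfl | ⟨h, _, _⟩ | ⟨h, _, _⟩)
        · exact heoE
        · exact h
        · exact h
    have hdisj2 : Disjoint ES EC := by
      rw [Finset.disjoint_left]
      intro p hp hp'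
      exact ((Finset.mem_filter.mp hp').2).2 ((Finset.mem_filter.mp hp).2).2
    have hdisj1 : Disjoint {eo} (ES ∪ EC) := by
      rw [Finset.disjoint_left]
      intro p hp hp'
      rw [Finset.mem_singleton] at hp
      rcases Finset.mem_union.mp hp' with h | h
      · exact ((Finset.mem_filter.mp h).2).1 hp
      · exact ((Finset.mem_filter.mp h).2).1 hp
    rw [h0, hEunion, Finset.prod_union hdisj1, Finset.prod_union hdisj2,
      Finset.prod_singleton]
    have h1 : Real.exp (θh eo.1 eo.2 * val (σ eo.1) * val (σ eo.2))
        = Real.exp (θh eo.1 eo.2 * (val (σ i) * val (σ j))) := by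
      rcases heocases with ⟨he, _⟩ | ⟨he, _⟩ <;> rw [he] <;> dsimp <;> ring_nf
    rw [h1]
    congr 1
    have hWS' : (∏ p ∈ ES, Real.exp (θh p.1 p.2 * val (σ p.1) * val (σ p.2))) = WS σ := by
      apply Finset.prod_congr rfl
      intro p hp
      have hm := Finset.mem_filter.mp (hESdef ▸ hp)
      rw [hag p hm.1 hm.2.1]
    have hWC' : (∏ p ∈ EC, Real.exp (θh p.1 p.2 * val (σ p.1) * val (σ p.2))) = WC σ := by
      apply Finset.prod_congr rfl
      intro p hp
      have hm := Finset.mem_filter.mp (hECdef ▸ hp)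
      rw [hag p hm.1 hm.2.1]
    rw [hWS', hWC']
  -- numerator/denominator decomposition
  have hnum : ∀ (θh : V → V → ℝ), (∀ p ∈ E, p ≠ eo → θh p.1 p.2 = θ p.1 p.2) →
      ∀ (P : (V → Bool) → Prop),
      Φ P (isingWeight G θh)
        = Real.exp (θh eo.1 eo.2) * Φ (fun σ => P σ ∧ σ i = σ j) WSWC
        + Real.exp (-θh eo.1 eo.2) * Φ (fun σ => P σ ∧ ¬ σ i = σ j) WSWC := by
    intro θh hag P
    rw [hΦdef]
    simp only
    rw [Finset.mul_sum, Finset.mul_sum, ← Finset.sum_add_distrib]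
    apply Finset.sum_congr rfl
    intro σ _
    by_cases hP : P σ
    · rw [if_pos hP, hdecomp θh hag σ]
      by_cases hq : σ i = σ j
      · rw [if_pos ⟨hP, hq⟩, if_neg (by tauto), mul_zero, add_zero, val_mul_of_eq hq, mul_one]
      · rw [if_neg (by tauto), if_pos ⟨hP, hq⟩, mul_zero, zero_add, val_mul_of_ne hq,
          mul_neg_one]
    · rw [if_neg hP, if_neg (by tauto), if_neg (by tauto), mul_zero, mul_zero, add_zero]
  -- factorization
  set κ : ℝ := (Fintype.card (V → Bool) : ℝ) with hκdef
  have hκpos : 0 < κ := by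
    rw [hκdef]
    exact_mod_cast Fintype.card_pos
  have hfact : ∀ (P Q : (V → Bool) → Prop),
      (∀ σ τ : V → Bool, (∀ v, S v → σ v = τ v) → (P σ ↔ P τ)) →
      (∀ σ τ : V → Bool, (∀ v, ¬ S v → σ v = τ v) → (Q σ ↔ Q τ)) →
      Φ P WS * Φ Q WC = κ * Φ (fun σ => P σ ∧ Q σ) WSWC := by
    intro P Q hP hQ
    rw [hΦdef]
    simp only
    rw [factor_sum S (fun σ => if P σ then WS σ else 0) (fun σ => if Q σ then WC σ else 0)
      (fun σ τ h => if_congr (hP σ τ h) (hWSdep σ τ h) rfl)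
      (fun σ τ h => if_congr (hQ σ τ h) (hWCdep σ τ h) rfl)]
    rw [hκdef]
    congr 1
    apply Finset.sum_congr rfl
    intro σ _
    by_cases h1 : P σ
    · by_cases h2 : Q σ
      · rw [if_pos h1, if_pos h2, if_pos (show P σ ∧ Q σ from ⟨h1, h2⟩)]
      · rw [if_pos h1, if_neg h2, if_neg (show ¬(P σ ∧ Q σ) from fun hc => h2 hc.2), mul_zero]
    · rw [if_neg h1, if_neg (show ¬(P σ ∧ Q σ) from fun hc => h1 hc.1), zero_mul]
  -- predicates
  set PIL : (V → Bool) → Prop := fun σ => ∀ v ∈ L, σ v = true with hPILdef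
  set PN : (V → Bool) → Prop := fun σ => PIL σ ∧ σ r = true with hPNdef
  set PILS : (V → Bool) → Prop := fun σ => ∀ v ∈ L, S v → σ v = true with hPILSdef
  set PILC : (V → Bool) → Prop := fun σ => ∀ v ∈ L, ¬ S v → σ v = true with hPILCdef
  set PILC' : (V → Bool) → Prop := fun σ => ∀ v ∈ L, ¬ S v → σ v = false with hPILC'def
  have hPILiff : ∀ σ, PIL σ ↔ PILS σ ∧ PILC σ := by
    intro σ
    constructor
    · intro h; exact ⟨fun v hv _ => h v hv, fun v hv _ => h v hv⟩
    · rintro ⟨h1, h2⟩ v hv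
      by_cases hS : S v
      · exact h1 v hv hS
      · exact h2 v hv hS
  set A : Bool → Bool → ℝ := fun s t => Φ (fun σ => PILS σ ∧ σ r = s ∧ σ i = t) WS with hAdef
  set B : Bool → ℝ := fun t => Φ (fun σ => PILC σ ∧ σ j = t) WC with hBdef
  set B' : Bool → ℝ := fun t => Φ (fun σ => PILC' σ ∧ σ j = t) WC with hB'def
  set Np : ℝ := Φ (fun σ => PN σ ∧ σ i = σ j) WSWC with hNpdef
  set Nm : ℝ := Φ (fun σ => PN σ ∧ ¬ σ i = σ j) WSWC with hNmdef
  set Dp : ℝ := Φ (fun σ => PIL σ ∧ σ i = σ j) WSWC with hDpdef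
  set Dm : ℝ := Φ (fun σ => PIL σ ∧ ¬ σ i = σ j) WSWC with hDmdef
  have hAB : ∀ (s t u : Bool),
      A s t * B u = κ * Φ (fun σ => (PILS σ ∧ σ r = s ∧ σ i = t) ∧ (PILC σ ∧ σ j = u)) WSWC := by
    intro s t u
    rw [hAdef, hBdef]
    apply hfact
    · intro σ τ h
      constructor
      · rintro ⟨h1, h2, h3⟩
        exact ⟨fun v hv hS => (h v hS) ▸ h1 v hv hS, (h r hSr) ▸ h2, (h i hSi) ▸ h3⟩
      · rintro ⟨h1, h2, h3⟩
        exact ⟨fun v hv hS => (h v hS).symm ▸ h1 v hv hS, (h r hSr).symm ▸ h2,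
          (h i hSi).symm ▸ h3⟩
    · intro σ τ h
      constructor
      · rintro ⟨h1, h2⟩
        exact ⟨fun v hv hS => (h v hS) ▸ h1 v hv hS, (h j hSj) ▸ h2⟩
      · rintro ⟨h1, h2⟩
        exact ⟨fun v hv hS => (h v hS).symm ▸ h1 v hv hS, (h j hSj).symm ▸ h2⟩
  -- the split identities
  have hsplitP : ∀ s : Bool, κ * Φ (fun σ => (PIL σ ∧ σ r = s) ∧ σ i = σ j) WSWC
      = A s true * B true + A s false * B false := by
    intro s
    rw [hΦsplit (fun σ => (PIL σ ∧ σ r = s) ∧ σ i = σ j) (fun σ => σ i = true) WSWC, mul_add,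
      hAB s true true, hAB s false false]
    congr 1
    · congr 1
      apply hΦcongr
      intro σ
      cases hi : σ i <;> cases hj : σ j <;> simp [hi, hj, hPILiff σ] <;> tauto
    · congr 1
      apply hΦcongr
      intro σ
      cases hi : σ i <;> cases hj : σ j <;> simp [hi, hj, hPILiff σ] <;> tauto
  have hsplitM : ∀ s : Bool, κ * Φ (fun σ => (PIL σ ∧ σ r = s) ∧ ¬ σ i = σ j) WSWC
      = A s true * B false + A s false * B true := by
    intro s
    rw [hΦsplit (fun σ => (PIL σ ∧ σ r = s) ∧ ¬ σ i = σ j) (fun σ => σ i = true) WSWC, mul_add,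
      hAB s true false, hAB s false true]
    congr 1
    · congr 1
      apply hΦcongr
      intro σ
      cases hi : σ i <;> cases hj : σ j <;> simp [hi, hj, hPILiff σ] <;> tauto
    · congr 1
      apply hΦcongr
      intro σ
      cases hi : σ i <;> cases hj : σ j <;> simp [hi, hj, hPILiff σ] <;> tauto
  have hNpeq : κ * Np = A true true * B true + A true false * B false := by
    rw [hNpdef, show (fun σ => PN σ ∧ σ i = σ j) = (fun σ => (PIL σ ∧ σ r = true) ∧ σ i = σ j)
      from rfl]
    exact hsplitP true
  have hNmeq : κ * Nm = A true true * B false + A true false * B true := by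
    rw [hNmdef, show (fun σ => PN σ ∧ ¬ σ i = σ j) = (fun σ => (PIL σ ∧ σ r = true) ∧ ¬ σ i = σ j)
      from rfl]
    exact hsplitM true
  have hDpeq : κ * Dp = (A true true * B true + A true false * B false)
      + (A false true * B true + A false false * B false) := by
    rw [hDpdef, hΦsplit (fun σ => PIL σ ∧ σ i = σ j) (fun σ => σ r = true) WSWC, mul_add]
    rw [show Φ (fun σ => (PIL σ ∧ σ i = σ j) ∧ σ r = true) WSWC
        = Φ (fun σ => (PIL σ ∧ σ r = true) ∧ σ i = σ j) WSWC from
      hΦcongr _ _ _ (fun σ => by tauto)]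
    rw [show Φ (fun σ => (PIL σ ∧ σ i = σ j) ∧ ¬ σ r = true) WSWC
        = Φ (fun σ => (PIL σ ∧ σ r = false) ∧ σ i = σ j) WSWC from
      hΦcongr _ _ _ (fun σ => by cases hr' : σ r <;> simp [hr'] <;> tauto)]
    rw [hsplitP true, hsplitP false]
  have hDmeq : κ * Dm = (A true true * B false + A true false * B true)
      + (A false true * B false + A false false * B true) := by
    rw [hDmdef, hΦsplit (fun σ => PIL σ ∧ ¬ σ i = σ j) (fun σ => σ r = true) WSWC, mul_add]
    rw [show Φ (fun σ => (PIL σ ∧ ¬ σ i = σ j) ∧ σ r = true) WSWC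
        = Φ (fun σ => (PIL σ ∧ σ r = true) ∧ ¬ σ i = σ j) WSWC from
      hΦcongr _ _ _ (fun σ => by tauto)]
    rw [show Φ (fun σ => (PIL σ ∧ ¬ σ i = σ j) ∧ ¬ σ r = true) WSWC
        = Φ (fun σ => (PIL σ ∧ σ r = false) ∧ ¬ σ i = σ j) WSWC from
      hΦcongr _ _ _ (fun σ => by cases hr' : σ r <;> simp [hr'] <;> tauto)]
    rw [hsplitM true, hsplitM false]
  -- the correlation inequalities (Ahlswede–Daykin applications)
  have hΦad : ∀ (w : (V → Bool) → ℝ), (∀ σ, 0 ≤ w σ) →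
      (∀ σ τ, w σ * w τ ≤ w (σ ⊓ τ) * w (σ ⊔ τ)) →
      ∀ (P₁ P₂ P₃ P₄ : (V → Bool) → Prop),
      (∀ a b, P₁ a → P₂ b → P₃ (a ⊓ b) ∧ P₄ (a ⊔ b)) →
      Φ P₁ w * Φ P₂ w ≤ Φ P₃ w * Φ P₄ w := by
    intro w hw hlsm P₁ P₂ P₃ P₄ hcomb
    rw [hΦdef]
    exact ad_ineq w hw hlsm P₁ P₂ P₃ P₄ hcomb
  have hI1 : A true false * A false true ≤ A false false * A true true := by
    rw [hAdef]
    apply hΦad WS hWSnn hWSlsm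
    rintro a b ⟨h1, h2, h3⟩ ⟨k1, k2, k3⟩
    refine ⟨⟨?_, ?_, ?_⟩, ?_, ?_, ?_⟩
    · intro v hv hS
      have := h1 v hv hS; have := k1 v hv hS
      simp [Pi.inf_apply, *]
    · simp [Pi.inf_apply, h2, k2]
    · simp [Pi.inf_apply, h3, k3]
    · intro v hv hS
      have := h1 v hv hS; have := k1 v hv hS
      simp [Pi.sup_apply, *]
    · simp [Pi.sup_apply, h2, k2]
    · simp [Pi.sup_apply, h3, k3]
  have hI2 : B false * B' true ≤ B' false * B true := by
    rw [hBdef, hB'def]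
    apply hΦad WC hWCnn hWClsm
    rintro a b ⟨h1, h2⟩ ⟨k1, k2⟩
    refine ⟨⟨?_, ?_⟩, ?_, ?_⟩
    · intro v hv hS
      have := h1 v hv hS; have := k1 v hv hS
      simp [Pi.inf_apply, *]
    · simp [Pi.inf_apply, h2, k2]
    · intro v hv hS
      have := h1 v hv hS; have := k1 v hv hS
      simp [Pi.sup_apply, *]
    · simp [Pi.sup_apply, h2, k2]
  -- flip symmetry
  have hflip : ∀ t, B' t = B (!t) := by
    intro t
    show Φ (fun σ => PILC' σ ∧ σ j = t) WC = Φ (fun σ => PILC σ ∧ σ j = !t) WC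
    have hinvol : Function.Involutive (fun (σ : V → Bool) (v : V) => !(σ v)) := by
      intro σ; funext v; simp
    have hWCflip : ∀ σ : V → Bool, WC (fun v => !(σ v)) = WC σ := by
      intro σ
      apply Finset.prod_congr rfl
      intro p _
      rw [show val (!(σ p.1)) = -val (σ p.1) from by cases σ p.1 <;> norm_num [_root_.val],
        show val (!(σ p.2)) = -val (σ p.2) from by cases σ p.2 <;> norm_num [_root_.val]]
      ring_nf
    have step1 : Φ (fun σ => PILC' σ ∧ σ j = t) WC
        = Φ (fun σ => PILC (fun v => !(σ v)) ∧ (!(σ j)) = !t) WC := by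
      apply hΦcongr
      intro σ
      constructor
      · rintro ⟨h1, h2⟩
        refine ⟨fun v hv hS => ?_, by rw [h2]⟩
        show (!(σ v)) = true
        rw [h1 v hv hS]
        rfl
      · rintro ⟨h1, h2⟩
        constructor
        · intro v hv hS
          have h3 : (!(σ v)) = true := h1 v hv hS
          revert h3
          cases hsv : σ v <;> simp
        · revert h2
          cases hsj : σ j <;> cases t <;> simp
    rw [step1]
    exact hΦcomp (fun σ => PILC σ ∧ σ j = !t) WC hinvol.toPerm (fun σ => hWCflip σ)
  -- nonnegativity
  have hB2 : B false * B false ≤ B true * B true := by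
    have h := hI2
    rw [hflip true, hflip false] at h
    simpa using h
  have hK : 0 ≤ Np * Dm - Nm * Dp := by
    have h0 : 0 ≤ (κ * Np) * (κ * Dm) - (κ * Nm) * (κ * Dp) := by
      rw [hNpeq, hNmeq, hDpeq, hDmeq]
      have e1 : 0 ≤ B true * B true - B false * B false := sub_nonneg.mpr hB2
      have e2 : 0 ≤ A false false * A true true - A true false * A false true :=
        sub_nonneg.mpr hI1
      nlinarith [e1, e2, mul_nonneg e1 e2]
    have h1 : 0 ≤ κ ^ 2 * (Np * Dm - Nm * Dp) := by
      rw [show κ ^ 2 * (Np * Dm - Nm * Dp)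
          = (κ * Np) * (κ * Dm) - (κ * Nm) * (κ * Dp) from by ring]
      exact h0
    exact (mul_nonneg_iff_of_pos_left (by positivity)).mp h1
  -- identification of numerators and denominators
  have hagθ : ∀ p ∈ E, p ≠ eo → θ p.1 p.2 = θ p.1 p.2 := fun p _ _ => rfl
  have hcond : ∀ θh : V → V → ℝ,
      condRootProb G θh r L true (fun _ => true)
        = Φ PN (isingWeight G θh) / Φ PIL (isingWeight G θh) := by
    intro θh
    unfold condRootProb
    congr 1
    · rw [hΦdef]
      apply Finset.sum_congr rfl
      intro σ _
      by_cases h : PN σ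
      · rw [if_pos (show (∀ v ∈ L, σ v = (fun _ => true) v) ∧ σ r = true from h), if_pos h]
      · rw [if_neg (show ¬((∀ v ∈ L, σ v = (fun _ => true) v) ∧ σ r = true) from h), if_neg h]
    · rw [hΦdef]
      apply Finset.sum_congr rfl
      intro σ _
      by_cases h : PIL σ
      · rw [if_pos (show (∀ v ∈ L, σ v = (fun _ => true) v) from h), if_pos h]
      · rw [if_neg (show ¬(∀ v ∈ L, σ v = (fun _ => true) v) from h), if_neg h]
  have hDposθ : ∀ θh : V → V → ℝ, 0 < Φ PIL (isingWeight G θh) := by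
    intro θh
    rw [hΦdef]
    apply Finset.sum_pos'
    · intro σ _
      split
      · exact le_of_lt (isingWeight_pos G θh σ)
      · exact le_refl 0
    · refine ⟨(fun _ => true), Finset.mem_univ _, ?_⟩
      rw [if_pos (show PIL (fun _ => true) from fun v _ => rfl)]
      exact isingWeight_pos G θh _
  have huu' : θ eo.1 eo.2 ≤ θ' eo.1 eo.2 := by
    rcases heocases with ⟨he, _⟩ | ⟨he, _⟩ <;> rw [he]
    · exact hmono
    · exact hmono'
  have d1 := hDposθ θ
  have d2 := hDposθ θ'
  rw [hnum θ hagθ PIL, ← hDpdef, ← hDmdef] at d1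
  rw [hnum θ' hagE PIL, ← hDpdef, ← hDmdef] at d2
  rw [hcond θ, hcond θ', hnum θ hagθ PN, hnum θ' hagE PN, hnum θ hagθ PIL, hnum θ' hagE PIL,
    ← hNpdef, ← hNmdef, ← hDpdef, ← hDmdef]
  rw [div_le_div_iff₀ d1 d2]
  have hX : Real.exp (θ eo.1 eo.2) * Real.exp (-θ' eo.1 eo.2)
      ≤ Real.exp (θ' eo.1 eo.2) * Real.exp (-θ eo.1 eo.2) := by
    rw [← Real.exp_add, ← Real.exp_add, Real.exp_le_exp]
    linarith
  nlinarith [mul_nonneg hK (sub_nonneg.mpr hX)]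

/-- In a tree Ising model with all positive edge parameters, the probability
`P(X_r = 1 | X_L = 1)` (all leaves set to `+1`) is monotonically non-decreasing in each
edge parameter `θ_{ij}`: increasing the parameter of one edge `{i,j}`, leaving all other
parameters unchanged, does not decrease it. -/
theorem stmt_7 {V : Type*} [Fintype V] [LinearOrder V]
    (G : SimpleGraph V) [DecidableRel G.Adj] (hT : G.IsTree)
    (r : V) (L : Finset V) (hL : ∀ v, v ∈ L ↔ v ≠ r ∧ G.degree v = 1)
    (θ θ' : V → V → ℝ)
    (hθ : ∀ p q, G.Adj p q → 0 < θ p q) (hθ' : ∀ p q, G.Adj p q → 0 < θ' p q)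
    (i j : V) (hij : G.Adj i j)
    (hagree : ∀ p q, ¬(p = i ∧ q = j) → ¬(p = j ∧ q = i) → θ' p q = θ p q)
    (hmono : θ i j ≤ θ' i j) (hmono' : θ j i ≤ θ' j i) :
    condRootProb G θ r L true (fun _ => true) ≤
      condRootProb G θ' r L true (fun _ => true) := by
  rcases reach_cover G hT.isConnected.preconnected i j r with h | h
  · exact main_lemma G hT r L θ θ' hθ i j hij hagree hmono hmono' h
  · rw [show s(i, j) = s(j, i) from Sym2.eq_swap] at h
    exact main_lemma G hT r L θ θ' hθ j i hij.symm
      (fun p q h1 h2 => hagree p q h2 h1) hmono' hmono h
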